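/- arXiv:2307.02550 — 6 statements merged into one kernel-verified Lean document; each statement's English description precedes it below -/
import Mathlib

section
/- Let n ≥ 1 and let D be a delta-matroid on [n, n̄] with feasible sets F. For every subset S ⊆ [n], the ℓ¹-distance from the point e_S to the polytope P(D), i.e. the infimum of ‖e_S − x‖₁ over x ∈ P(D), is attained and equals d_D(S) = min over B ∈ F of |S △ (B ∩ [n])| (the symmetric difference cardinality), which also equals min over B ∈ F of (|S ∪ (B∩[n])| − |S ∩ B ∩ [n]|). -/
open Finset

/-- The 0/1 indicator vector `e_S ∈ ℝ^n` of a subset `S ⊆ [n]`. -/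
def eVec {n : ℕ} (S : Finset (Fin n)) : Fin n → ℝ := fun i => if i ∈ S then 1 else 0

/-- The base polytope `P(D) = conv{e_{B ∩ [n]} : B ∈ F}`, where a maximal admissible subset
`B ⊆ [n] ∪ [n̄]` is identified with the subset `B ∩ [n]` of `[n]` (this identification is a
bijection between maximal admissible subsets and subsets of `[n]`). -/
def basePolytope {n : ℕ} (F : Finset (Finset (Fin n))) : Set (Fin n → ℝ) :=
  convexHull ℝ (eVec '' (F : Set (Finset (Fin n))))

/-- `d` is `±e_i`, `±(e_i + e_j)` or `±(e_i - e_j)` for some `i, j ∈ [n]`, i.e. a segment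
from `x` to `x + d` is a parallel translate of `e_i` or `e_i ± e_j`. -/
def IsEdgeDir {n : ℕ} (d : Fin n → ℝ) : Prop :=
  (∃ i : Fin n, d = Pi.single i 1 ∨ d = -Pi.single i 1) ∨
  (∃ i j : Fin n, d = Pi.single i 1 + Pi.single j 1 ∨
      d = -(Pi.single i 1 + Pi.single j 1) ∨ d = Pi.single i 1 - Pi.single j 1)

/-- A delta-matroid on `[n, n̄]`: a nonempty collection of (maximal admissible) feasible sets,
each recorded via its intersection with `[n]`, such that every edge of the base polytope
(i.e. every segment between two distinct points which is an extreme subset of the polytope)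
is a parallel translate of `e_i` or `e_i ± e_j`. -/
structure DeltaMatroid (n : ℕ) where
  feasible : Finset (Finset (Fin n))
  feasible_nonempty : feasible.Nonempty
  edge_dir : ∀ x y : Fin n → ℝ, x ∈ basePolytope feasible → y ∈ basePolytope feasible →
      x ≠ y → IsExtreme ℝ (basePolytope feasible) (segment ℝ x y) → IsEdgeDir (y - x)

/-- `d_D(S) = min_{B ∈ F} |S △ (B ∩ [n])|`. -/
def dDist {n : ℕ} (D : DeltaMatroid n) (S : Finset (Fin n)) : ℕ :=
  (D.feasible.image fun B => (symmDiff S B).card).min' (D.feasible_nonempty.image _)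

lemma sum_eVec {n : ℕ} (T : Finset (Fin n)) : ∑ i, eVec T i = (T.card : ℝ) := by
  simp [eVec]

lemma eVec_abs {n : ℕ} (S B : Finset (Fin n)) (i : Fin n) :
    |eVec S i - eVec B i| = eVec (symmDiff S B) i := by
  by_cases hS : i ∈ S <;> by_cases hB : i ∈ B <;>
    simp [eVec, Finset.mem_symmDiff, hS, hB]

lemma eVec_aff {n : ℕ} (S B : Finset (Fin n)) (i : Fin n) :
    eVec S i + (1 - 2 * eVec S i) * eVec B i = eVec (symmDiff S B) i := by
  by_cases hS : i ∈ S <;> by_cases hB : i ∈ B <;>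
    simp [eVec, Finset.mem_symmDiff, hS, hB] <;> ring

lemma eVec_mem_Icc {n : ℕ} (T : Finset (Fin n)) : eVec T ∈ Set.Icc (0 : Fin n → ℝ) 1 := by
  constructor <;> intro i <;> by_cases h : i ∈ T <;> simp [eVec, h]

lemma card_symmDiff' {n : ℕ} (S B : Finset (Fin n)) :
    (symmDiff S B).card = (S ∪ B).card - (S ∩ B).card := by
  rw [show symmDiff S B = (S ∪ B) \ (S ∩ B) by ext x; simp [Finset.mem_symmDiff]; tauto]
  exact Finset.card_sdiff_of_subset inf_le_sup

/-- The ℓ¹-distance from `e_S` to `P(D)` is attained and equals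
`d_D(S) = min_{B ∈ F} |S △ (B ∩ [n])| = min_{B ∈ F} (|S ∪ (B ∩ [n])| - |S ∩ B ∩ [n]|)`. -/
theorem stmt0 {n : ℕ} (hn : 1 ≤ n) (D : DeltaMatroid n) (S : Finset (Fin n)) :
    IsLeast {r : ℝ | ∃ x ∈ basePolytope D.feasible, r = ∑ i, |eVec S i - x i|}
      ((dDist D S : ℝ)) ∧
    dDist D S
      = (D.feasible.image fun B => (S ∪ B).card - (S ∩ B).card).min'
          (D.feasible_nonempty.image _) := by
  set L : (Fin n → ℝ) → ℝ := fun x => ∑ i, (eVec S i + (1 - 2 * eVec S i) * x i) with hL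
  have hLv : ∀ B : Finset (Fin n), L (eVec B) = ((symmDiff S B).card : ℝ) := by
    intro B
    simp only [hL]
    rw [Finset.sum_congr rfl (fun i _ => eVec_aff S B i), sum_eVec]
  have hlb : ∀ B ∈ D.feasible, (dDist D S : ℝ) ≤ L (eVec B) := by
    intro B hB
    rw [hLv B]
    exact_mod_cast Finset.min'_le _ _ (Finset.mem_image_of_mem _ hB)
  -- convex lower-bound set
  have hconv : Convex ℝ {x : Fin n → ℝ | (dDist D S : ℝ) ≤ L x} := by
    intro x hx y hy a b ha hb hab
    have hLaff : L (a • x + b • y) = a * L x + b * L y := by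
      simp only [hL, Pi.add_apply, Pi.smul_apply, smul_eq_mul]
      rw [Finset.mul_sum, Finset.mul_sum, ← Finset.sum_add_distrib]
      refine Finset.sum_congr rfl fun i _ => ?_
      linear_combination (eVec S i) * hab.symm
    simp only [Set.mem_setOf_eq] at hx hy ⊢
    rw [hLaff]
    nlinarith
  have hhull : basePolytope D.feasible ⊆ {x : Fin n → ℝ | (dDist D S : ℝ) ≤ L x} := by
    apply convexHull_min _ hconv
    rintro _ ⟨B, hB, rfl⟩
    exact hlb B hB
  have hIcc : basePolytope D.feasible ⊆ Set.Icc (0 : Fin n → ℝ) 1 := by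
    apply convexHull_min _ (convex_Icc _ _)
    rintro _ ⟨B, hB, rfl⟩
    exact eVec_mem_Icc B
  have habs : ∀ x ∈ Set.Icc (0 : Fin n → ℝ) 1, ∑ i, |eVec S i - x i| = L x := by
    intro x hx
    refine Finset.sum_congr rfl fun i _ => ?_
    have h0 : (0 : ℝ) ≤ x i := hx.1 i
    have h1 : x i ≤ 1 := hx.2 i
    by_cases hS : i ∈ S
    · simp only [eVec, if_pos hS]
      rw [abs_of_nonneg (by linarith)]; ring
    · simp only [eVec, if_neg hS]
      rw [abs_of_nonpos (by linarith)]; ring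
  refine ⟨⟨?_, ?_⟩, ?_⟩
  · -- membership: attained at a minimizing vertex
    have hmem := Finset.min'_mem (D.feasible.image fun B => (symmDiff S B).card)
      (D.feasible_nonempty.image _)
    rw [Finset.mem_image] at hmem
    obtain ⟨B, hB, hBmin⟩ := hmem
    refine ⟨eVec B, subset_convexHull ℝ _ ⟨B, hB, rfl⟩, ?_⟩
    rw [Finset.sum_congr rfl (fun i _ => eVec_abs S B i), sum_eVec]
    exact_mod_cast (congrArg (Nat.cast : ℕ → ℝ) hBmin).symm
  · -- lower bound
    rintro r ⟨x, hx, rfl⟩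
    rw [habs x (hIcc hx)]
    exact hhull hx
  · -- second equality
    have himg : (D.feasible.image fun B => (symmDiff S B).card)
        = D.feasible.image fun B => (S ∪ B).card - (S ∩ B).card :=
      Finset.image_congr fun B _ => card_symmDiff' S B
    simp only [dDist, himg]
end

section
/- Let n ≥ 1. Let W be the group of signed permutations on [n, n̄], i.e. bijections w of [n] ∪ [n̄] with w(ī) = w(i)‾ for all i ∈ [n], viewed via their restriction w : [n] → [n] ∪ [n̄]. For i ∈ [n] set ε_i = e_i ∈ ℤ^n and ε_ī = −e_i. For 1 ≤ k ≤ n−1, let wτ_k be the signed permutation agreeing with w except (wτ_k)(k) = w(k+1) and (wτ_k)(k+1) = w(k), with associated exponent vector c = ε_{w(k)} − ε_{w(k+1)}; let wτ_n agree with w except (wτ_n)(n) = w(n)‾, with associated exponent vector c = ε_{w(n)}. Let L = ℤ[T_1^{±1},…,T_n^{±1}], let K = Frac(ℚ[t_1,…,t_n]), let φ : L → K be the ring homomorphism with φ(T_i) = (1+t_i)/(1−t_i), and let S ⊆ K be the subring generated by ℤ[t_1,…,t_n] and all (1−t_i)^{−1}, (1+t_i)^{−1}. Suppose (f_w)_{w∈W}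 is a family in L such that for every w ∈ W and every k ∈ {1,…,n}, the difference f_w − f_{wτ_k} is divisible in L by 1 − T^c, where c is the associated exponent vector and T^c = ∏_j T_j^{c_j}. Then φ(f_w) ∈ S for every w, and for every w and k, φ(f_w) − φ(f_{wτ_k}) ∈ (Σ_{j=1}^n c_j t_j) · S. -/
/-- The Laurent polynomial ring `ℤ[T_1^{±1},…,T_n^{±1}]`, realized as the group algebra
of `ℤ^n` over `ℤ` (equivalently, the localization of `ℤ[T_1,…,T_n]` at monomials). -/
abbrev Laur (n : ℕ) : Type := AddMonoidAlgebra ℤ (Fin n →₀ ℤ)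

/-- The variable `T_i` in `ℤ[T_1^{±1},…,T_n^{±1}]`. -/
noncomputable def Tvar (n : ℕ) (i : Fin n) : Laur n :=
  AddMonoidAlgebra.single (Finsupp.single i 1) 1

/-- `K = Frac(ℚ[t_1,…,t_n])`, the field of rational functions. -/
abbrev KK (n : ℕ) : Type := FractionRing (MvPolynomial (Fin n) ℚ)

/-- The element `t_i ∈ K`. -/
noncomputable def tvar (n : ℕ) (i : Fin n) : KK n :=
  algebraMap (MvPolynomial (Fin n) ℚ) (KK n) (MvPolynomial.X i)

/-- The subring `S ⊆ K` generated by `ℤ[t_1,…,t_n]` together with the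
elements `(1-t_i)⁻¹` and `(1+t_i)⁻¹`. -/
noncomputable def SS (n : ℕ) : Subring (KK n) :=
  Subring.closure (Set.range (tvar n) ∪ Set.range (fun i => (1 - tvar n i)⁻¹)
    ∪ Set.range (fun i => (1 + tvar n i)⁻¹))

/-- A signed permutation `w` of `[n, n̄]`, encoded as an underlying permutation `w.1` of `[n]`
together with signs `w.2 : [n] → Bool` (so `w(k) = w.1 k` if `w.2 k = true`, and
`w(k) = (w.1 k)‾` otherwise). -/
abbrev SignedPerm (n : ℕ) : Type := Equiv.Perm (Fin n) × (Fin n → Bool)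

/-- Sign of a `Bool`: `true ↦ 1`, `false ↦ -1`. -/
def sgnZ (b : Bool) : ℤ := if b then 1 else -1

/-- The exponent vector `c` attached to the edge `(w, wτ)` of the moment graph:
for `k` with `k + 1 < n` (the adjacent transposition `τ_{k,k+1}`, 0-indexed) it is
`ε_{w(k)} - ε_{w(k+1)}`, and for the last index (the sign-flip `τ_n`) it is `ε_{w(n)}`,
where `ε_i = e_i` and `ε_ī = -e_i`. -/
noncomputable def cvec {n : ℕ} (w : SignedPerm n) (k : Fin n) : Fin n →₀ ℤ :=
  if h : (k : ℕ) + 1 < n then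
    sgnZ (w.2 k) • Finsupp.single (w.1 k) 1
      - sgnZ (w.2 ⟨(k : ℕ) + 1, h⟩) • Finsupp.single (w.1 ⟨(k : ℕ) + 1, h⟩) 1
  else sgnZ (w.2 k) • Finsupp.single (w.1 k) 1

/-- The signed permutation `wτ_k`: for `k` with `k + 1 < n` it agrees with `w` except that
the values (with signs) at `k` and `k+1` are swapped; for the last index it agrees with `w`
except that the sign at the last index is flipped. -/
noncomputable def tauAct {n : ℕ} (w : SignedPerm n) (k : Fin n) : SignedPerm n :=
  if h : (k : ℕ) + 1 < n then
    (w.1 * Equiv.swap k ⟨(k : ℕ) + 1, h⟩, w.2 ∘ Equiv.swap k ⟨(k : ℕ) + 1, h⟩)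
  else (w.1, Function.update w.2 k (!w.2 k))

section Aux
variable {n : ℕ}

lemma one_sub_tvar_ne (i : Fin n) : (1 : KK n) - tvar n i ≠ 0 := by
  intro h
  have h1 : algebraMap (MvPolynomial (Fin n) ℚ) (KK n) (1 - MvPolynomial.X i) = 0 := by
    rw [map_sub, map_one]; exact h
  have h2 : (1 - MvPolynomial.X i : MvPolynomial (Fin n) ℚ) = 0 := by
    apply IsFractionRing.injective (MvPolynomial (Fin n) ℚ) (KK n)
    simpa using h1
  have h3 := congrArg (MvPolynomial.eval (fun _ => (0:ℚ))) h2
  simp at h3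

lemma one_add_tvar_ne (i : Fin n) : (1 : KK n) + tvar n i ≠ 0 := by
  intro h
  have h1 : algebraMap (MvPolynomial (Fin n) ℚ) (KK n) (1 + MvPolynomial.X i) = 0 := by
    rw [map_add, map_one]; exact h
  have h2 : (1 + MvPolynomial.X i : MvPolynomial (Fin n) ℚ) = 0 := by
    apply IsFractionRing.injective (MvPolynomial (Fin n) ℚ) (KK n)
    simpa using h1
  have h3 := congrArg (MvPolynomial.eval (fun _ => (0:ℚ))) h2
  simp at h3

lemma tvar_mem (i : Fin n) : tvar n i ∈ SS n :=
  Subring.subset_closure (Or.inl (Or.inl ⟨i, rfl⟩))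

lemma inv_sub_mem (i : Fin n) : (1 - tvar n i)⁻¹ ∈ SS n :=
  Subring.subset_closure (Or.inl (Or.inr ⟨i, rfl⟩))

lemma inv_add_mem (i : Fin n) : (1 + tvar n i)⁻¹ ∈ SS n :=
  Subring.subset_closure (Or.inr ⟨i, rfl⟩)

noncomputable def uvar (n : ℕ) (i : Fin n) : KK n := (1 + tvar n i) / (1 - tvar n i)

lemma uvar_ne (i : Fin n) : uvar n i ≠ 0 :=
  div_ne_zero (one_add_tvar_ne i) (one_sub_tvar_ne i)

lemma uvar_mem (i : Fin n) : uvar n i ∈ SS n := by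
  rw [uvar, div_eq_mul_inv]
  exact Subring.mul_mem _ (Subring.add_mem _ (Subring.one_mem _) (tvar_mem i)) (inv_sub_mem i)

lemma uvar_inv_mem (i : Fin n) : (uvar n i)⁻¹ ∈ SS n := by
  rw [uvar, inv_div, div_eq_mul_inv]
  exact Subring.mul_mem _ (Subring.sub_mem _ (Subring.one_mem _) (tvar_mem i)) (inv_add_mem i)

lemma uvar_zpow_mem (i : Fin n) (m : ℤ) : uvar n i ^ m ∈ SS n := by
  rcases m with m | m
  · rw [Int.ofNat_eq_coe, zpow_natCast]; exact pow_mem (uvar_mem i) m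
  · rw [zpow_negSucc, ← inv_pow]; exact pow_mem (uvar_inv_mem i) _

end Aux
section Phi
variable {n : ℕ} (φ : Laur n →+* KK n)
  (hφ : ∀ i, φ (Tvar n i) = (1 + tvar n i) / (1 - tvar n i))

lemma single_add_mul (x y : Fin n →₀ ℤ) :
    AddMonoidAlgebra.single (x + y) (1 : ℤ)
      = AddMonoidAlgebra.single x (1:ℤ) * AddMonoidAlgebra.single y (1:ℤ) := by
  rw [AddMonoidAlgebra.single_mul_single, one_mul]

include hφ in
lemma phi_single_zpow (i : Fin n) (m : ℤ) :
    φ (AddMonoidAlgebra.single (Finsupp.single i m) (1 : ℤ)) = uvar n i ^ m := by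
  have hT : φ (AddMonoidAlgebra.single (Finsupp.single i 1) (1 : ℤ)) = uvar n i := hφ i
  have hTinv : φ (AddMonoidAlgebra.single (Finsupp.single i (-1)) (1 : ℤ)) = (uvar n i)⁻¹ := by
    have h1 : AddMonoidAlgebra.single (Finsupp.single i 1) (1:ℤ)
        * AddMonoidAlgebra.single (Finsupp.single i (-1)) (1:ℤ) = 1 := by
      rw [← single_add_mul]
      simp [← Finsupp.single_add, AddMonoidAlgebra.one_def]
    have := congrArg φ h1
    rw [map_mul, map_one, hT] at this
    field_simp [uvar_ne i] at this ⊢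
    linear_combination this
  induction m using Int.induction_on with
  | zero => rw [Finsupp.single_zero, ← AddMonoidAlgebra.one_def, map_one, zpow_zero]
  | succ k ih =>
      have : Finsupp.single i ((k:ℤ) + 1) = Finsupp.single i (k:ℤ) + Finsupp.single i 1 := by
        rw [← Finsupp.single_add]
      rw [this, single_add_mul, map_mul, ih, hT, zpow_add_one₀ (uvar_ne i)]
  | pred k ih =>
      have : Finsupp.single i (-(k:ℤ) - 1) = Finsupp.single i (-(k:ℤ)) + Finsupp.single i (-1) := by
        rw [← Finsupp.single_add]; ring_nf
      rw [this, single_add_mul, map_mul, ih, hTinv, ← zpow_sub_one₀ (uvar_ne i)]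

include hφ in
lemma phi_single_mem (a : Fin n →₀ ℤ) :
    φ (AddMonoidAlgebra.single a (1:ℤ)) ∈ SS n := by
  induction a using Finsupp.induction with
  | zero => rw [← AddMonoidAlgebra.one_def, map_one]; exact Subring.one_mem _
  | single_add i m rest hmem hne ih =>
      rw [single_add_mul, map_mul, phi_single_zpow φ hφ]
      exact Subring.mul_mem _ (uvar_zpow_mem i m) ih

include hφ in
lemma phi_mem (x : Laur n) : φ x ∈ SS n := by
  induction x using AddMonoidAlgebra.induction with
  | zero => rw [map_zero]; exact Subring.zero_mem _
  | single_add a b rest hmem hne ih =>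
      rw [map_add]
      refine Subring.add_mem _ ?_ ih
      have : (AddMonoidAlgebra.single a b : Laur n) = b • AddMonoidAlgebra.single a (1:ℤ) := by
        rw [AddMonoidAlgebra.smul_single, smul_eq_mul, mul_one]
      rw [this, map_zsmul]
      exact zsmul_mem (phi_single_mem φ hφ a) b

end Phi
section Edge
variable {n : ℕ} (φ : Laur n →+* KK n)
  (hφ : ∀ i, φ (Tvar n i) = (1 + tvar n i) / (1 - tvar n i))

lemma upow_sign (i : Fin n) (ε : ℤ) (hε : ε = 1 ∨ ε = -1) :
    uvar n i ^ ε = (1 + (ε : KK n) * tvar n i) / (1 - (ε : KK n) * tvar n i) := by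
  rcases hε with h | h <;> subst h
  · rw [zpow_one, uvar]; push_cast; rw [one_mul]
  · rw [zpow_neg_one, uvar, inv_div]; push_cast; ring_nf

lemma sign_sub_ne (i : Fin n) (ε : ℤ) (hε : ε = 1 ∨ ε = -1) :
    (1 : KK n) - (ε : KK n) * tvar n i ≠ 0 := by
  rcases hε with h | h <;> subst h
  · push_cast; rw [one_mul]; exact one_sub_tvar_ne i
  · push_cast
    intro h
    apply one_add_tvar_ne i
    linear_combination h

lemma sign_add_ne (i : Fin n) (ε : ℤ) (hε : ε = 1 ∨ ε = -1) :
    (1 : KK n) + (ε : KK n) * tvar n i ≠ 0 := by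
  rcases hε with h | h <;> subst h
  · push_cast; rw [one_mul]; exact one_add_tvar_ne i
  · push_cast
    intro h
    apply one_sub_tvar_ne i
    linear_combination h

lemma sign_sub_inv_mem (i : Fin n) (ε : ℤ) (hε : ε = 1 ∨ ε = -1) :
    ((1 : KK n) - (ε : KK n) * tvar n i)⁻¹ ∈ SS n := by
  rcases hε with h | h <;> subst h
  · push_cast; rw [one_mul]; exact inv_sub_mem i
  · push_cast
    have : (1 : KK n) - (-1) * tvar n i = 1 + tvar n i := by ring
    rw [this]; exact inv_add_mem i

lemma sign_add_inv_mem (i : Fin n) (ε : ℤ) (hε : ε = 1 ∨ ε = -1) :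
    ((1 : KK n) + (ε : KK n) * tvar n i)⁻¹ ∈ SS n := by
  rcases hε with h | h <;> subst h
  · push_cast; rw [one_mul]; exact inv_add_mem i
  · push_cast
    have : (1 : KK n) + (-1) * tvar n i = 1 - tvar n i := by ring
    rw [this]; exact inv_sub_mem i

lemma sum_single_mul (a : Fin n) (m : ℤ) :
    ∑ j, ((Finsupp.single a m j : ℤ) : KK n) * tvar n j = (m : KK n) * tvar n a := by
  rw [Finset.sum_eq_single a]
  · simp
  · intro j _ hj
    rw [Finsupp.single_apply, if_neg (by exact fun h => hj h.symm)]
    simp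
  · intro h; exact absurd (Finset.mem_univ a) h

lemma sgnZ_cases (b : Bool) : sgnZ b = 1 ∨ sgnZ b = -1 := by
  cases b <;> simp [sgnZ]

include hφ in
lemma edge_single (a : Fin n) (ε : ℤ) (hε : ε = 1 ∨ ε = -1) :
    ∃ s ∈ SS n, 1 - φ (AddMonoidAlgebra.single (Finsupp.single a ε) (1:ℤ))
      = (∑ j, ((Finsupp.single a ε j : ℤ) : KK n) * tvar n j) * s := by
  refine ⟨(-2) * (1 - (ε : KK n) * tvar n a)⁻¹, ?_, ?_⟩
  · exact Subring.mul_mem _ (by exact_mod_cast intCast_mem (SS n) (-2))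
      (sign_sub_inv_mem a ε hε)
  · rw [phi_single_zpow φ hφ, upow_sign a ε hε, sum_single_mul]
    have h1 := sign_sub_ne a ε hε
    field_simp
    ring

include hφ in
lemma edge_pair (a b : Fin n) (ε δ : ℤ) (hε : ε = 1 ∨ ε = -1) (hδ : δ = 1 ∨ δ = -1) :
    ∃ s ∈ SS n, 1 - φ (AddMonoidAlgebra.single (Finsupp.single a ε - Finsupp.single b δ) (1:ℤ))
      = (∑ j, (((Finsupp.single a ε - Finsupp.single b δ) j : ℤ) : KK n) * tvar n j) * s := by
  refine ⟨(-2) * (1 - (ε : KK n) * tvar n a)⁻¹ * (1 + (δ : KK n) * tvar n b)⁻¹, ?_, ?_⟩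
  · exact Subring.mul_mem _ (Subring.mul_mem _ (by exact_mod_cast intCast_mem (SS n) (-2))
      (sign_sub_inv_mem a ε hε)) (sign_add_inv_mem b δ hδ)
  · have hc : Finsupp.single a ε - Finsupp.single b δ
        = Finsupp.single a ε + Finsupp.single b (-δ) := by
      rw [sub_eq_add_neg, Finsupp.single_neg]
    have hδ' : -δ = 1 ∨ -δ = -1 := by rcases hδ with h | h <;> subst h <;> simp
    rw [hc, single_add_mul, map_mul, phi_single_zpow φ hφ, phi_single_zpow φ hφ,
      upow_sign a ε hε, upow_sign b (-δ) hδ']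
    have hsum : ∑ j, (((Finsupp.single a ε + Finsupp.single b (-δ)) j : ℤ) : KK n) * tvar n j
        = (ε : KK n) * tvar n a + (-δ : ℤ) * tvar n b := by
      have : ∀ j, (((Finsupp.single a ε + Finsupp.single b (-δ)) j : ℤ) : KK n) * tvar n j
          = ((Finsupp.single a ε j : ℤ) : KK n) * tvar n j
            + ((Finsupp.single b (-δ) j : ℤ) : KK n) * tvar n j := by
        intro j
        rw [Finsupp.add_apply]
        push_cast
        ring
      rw [Finset.sum_congr rfl (fun j _ => this j), Finset.sum_add_distrib,
        sum_single_mul, sum_single_mul]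
    rw [hsum]
    have h1 := sign_sub_ne a ε hε
    have h2 := sign_add_ne b δ hδ
    have h3 : (1 : KK n) - ((-δ : ℤ) : KK n) * tvar n b = 1 + (δ : KK n) * tvar n b := by
      push_cast; ring
    have h4 : (1 : KK n) + ((-δ : ℤ) : KK n) * tvar n b = 1 - (δ : KK n) * tvar n b := by
      push_cast; ring
    rw [h3, h4]
    have h5 := sign_sub_ne b δ hδ
    push_cast
    field_simp
    ring

end Edge
/-- Well-definedness of `ψ_T` on the GKM description: if the family `(f_w)` satisfies the
`K`-theoretic compatibility (each `f_w - f_{wτ_k}` divisible by `1 - T^c`), then each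
`φ(f_w)` lies in `S` and each difference `φ(f_w) - φ(f_{wτ_k})` lies in `(Σ_j c_j t_j)·S`. -/
theorem stmt9 {n : ℕ} (hn : 1 ≤ n) (φ : Laur n →+* KK n)
    (hφ : ∀ i, φ (Tvar n i) = (1 + tvar n i) / (1 - tvar n i))
    (f : SignedPerm n → Laur n)
    (hf : ∀ (w : SignedPerm n) (k : Fin n),
      (1 - AddMonoidAlgebra.single (cvec w k) (1 : ℤ)) ∣ (f w - f (tauAct w k))) :
    (∀ w, φ (f w) ∈ SS n) ∧
    (∀ (w : SignedPerm n) (k : Fin n), ∃ s ∈ SS n,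
      φ (f w) - φ (f (tauAct w k)) = (∑ j, (cvec w k j : KK n) * tvar n j) * s) := by
  constructor
  · intro w; exact phi_mem φ hφ (f w)
  · intro w k
    obtain ⟨g, hg⟩ := hf w k
    have hdiff : φ (f w) - φ (f (tauAct w k))
        = (1 - φ (AddMonoidAlgebra.single (cvec w k) (1:ℤ))) * φ g := by
      rw [← map_sub, hg, map_mul, map_sub, map_one]
    by_cases h : (k : ℕ) + 1 < n
    · have hc : cvec w k = Finsupp.single (w.1 k) (sgnZ (w.2 k))
          - Finsupp.single (w.1 ⟨(k:ℕ)+1, h⟩) (sgnZ (w.2 ⟨(k:ℕ)+1, h⟩)) := by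
        rw [cvec, dif_pos h]
        congr 1 <;> rw [Finsupp.smul_single, smul_eq_mul, mul_one]
      obtain ⟨s, hs, heq⟩ := edge_pair φ hφ (w.1 k) (w.1 ⟨(k:ℕ)+1, h⟩)
        (sgnZ (w.2 k)) (sgnZ (w.2 ⟨(k:ℕ)+1, h⟩)) (sgnZ_cases _) (sgnZ_cases _)
      refine ⟨s * φ g, Subring.mul_mem _ hs (phi_mem φ hφ g), ?_⟩
      rw [hdiff, hc, heq]
      ring
    · have hc : cvec w k = Finsupp.single (w.1 k) (sgnZ (w.2 k)) := by
        rw [cvec, dif_neg h, Finsupp.smul_single, smul_eq_mul, mul_one]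
      obtain ⟨s, hs, heq⟩ := edge_single φ hφ (w.1 k) (sgnZ (w.2 k)) (sgnZ_cases _)
      refine ⟨s * φ g, Subring.mul_mem _ hs (phi_mem φ hφ g), ?_⟩
      rw [hdiff, hc, heq]
      ring
end

section
/- Let A be a commutative ring equipped with an internal ℕ-grading A = ⊕_{i≥0} A_i (additive subgroups with A_i · A_j ⊆ A_{i+j} and 1 ∈ A_0) such that every homogeneous component A_i is 2-torsion-free (for x ∈ A_i, 2x = 0 implies x = 0). If a, b ∈ A both have degree-0 component equal to 1 (that is, a = 1 + a' and b = 1 + b' with a', b' ∈ ⊕_{i≥1} A_i) and a² = b², then a = b. -/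
/-- In a commutative ring with an internal ℕ-grading by additive subgroups whose homogeneous
components are 2-torsion-free, two elements whose degree-0 components both equal `1` and
whose squares agree must be equal. -/
theorem stmt10 {A : Type*} [CommRing A] (𝒜 : ℕ → AddSubgroup A) [GradedRing 𝒜]
    (htf : ∀ i : ℕ, ∀ x : A, x ∈ 𝒜 i → 2 * x = 0 → x = 0)
    (a b : A)
    (ha : ((DirectSum.decompose 𝒜 a 0 : 𝒜 0) : A) = 1)
    (hb : ((DirectSum.decompose 𝒜 b 0 : 𝒜 0) : A) = 1)
    (hab : a ^ 2 = b ^ 2) : a = b := by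
  classical
  set c := a + b with hc
  set d := a - b with hd
  have hzero : c * d = 0 := by
    have : c * d = a ^ 2 - b ^ 2 := by rw [hc, hd]; ring
    rw [this, hab, sub_self]
  have hc0 : ((DirectSum.decompose 𝒜 c 0 : 𝒜 0) : A) = 2 := by
    rw [hc, DirectSum.decompose_add, DirectSum.add_apply, AddMemClass.coe_add, ha, hb]
    norm_num
  have key : ∀ n : ℕ, ((DirectSum.decompose 𝒜 d n : 𝒜 n) : A) = 0 := by
    intro n
    induction n using Nat.strong_induction_on with
    | _ n ih =>
      set rc := DirectSum.decompose 𝒜 c with hrc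
      set rd := DirectSum.decompose 𝒜 d with hrd
      set S := (rc.support ×ˢ rd.support).filter (fun ij : ℕ × ℕ => ij.1 + ij.2 = n) with hS
      have hmul : ((((rc * rd) n : 𝒜 n)) : A)
          = ∑ ij ∈ S, ((rc ij.1 : A) * (rd ij.2 : A)) :=
        DirectSum.coe_mul_apply 𝒜 rc rd n
      have hlhs : (((rc * rd) n : 𝒜 n) : A) = 0 := by
        rw [hrc, hrd, ← DirectSum.decompose_mul, hzero]
        simp
      have hsub : S ⊆ {((0 : ℕ), n)} := by
        intro ij hij
        simp only [hS, Finset.mem_filter, Finset.mem_product, DFinsupp.mem_support_iff] at hij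
        obtain ⟨⟨hci, hdj⟩, hsum'⟩ := hij
        have hj : ¬ ij.2 < n := by
          intro hlt
          exact hdj (by
            have := ih ij.2 hlt
            exact (ZeroMemClass.coe_eq_zero).mp this)
        have h2 : ij.2 = n := by omega
        have h1 : ij.1 = 0 := by omega
        simp [Finset.mem_singleton, Prod.ext_iff, h1, h2]
      have hsum2 : ∑ ij ∈ S, ((rc ij.1 : A) * (rd ij.2 : A))
          = (rc 0 : A) * (rd n : A) := by
        rw [Finset.sum_subset hsub ?_]
        · simp
        · intro ij hmem hnot
          simp only [Finset.mem_singleton] at hmem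
          subst hmem
          simp only [hS, Finset.mem_filter, Finset.mem_product, DFinsupp.mem_support_iff,
            zero_add, and_true, not_and, not_not] at hnot
          by_cases hcz : rc 0 = 0
          · simp [hcz]
          · rw [hnot hcz]; simp
      have h2d : 2 * ((rd n : 𝒜 n) : A) = 0 := by
        have : (rc 0 : A) * (rd n : A) = 0 := by
          rw [← hsum2, ← hmul, hlhs]
        rwa [hrc, hc0] at this
      exact htf n _ (SetLike.coe_mem _) h2d
  have hd0 : d = 0 := by
    have := DirectSum.sum_support_decompose 𝒜 d
    rw [Finset.sum_congr rfl (fun i _ => key i)] at this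
    simpa using this.symm
  have := sub_eq_zero.mp (hd ▸ hd0)
  exact this
end

section
/- Let n ≥ 1, let D be a delta-matroid on [n, n̄] with feasible sets F, and let w be a signed permutation on [n, n̄] (a bijection of [n] ∪ [n̄] with w(ī) = w(i)‾, viewed via w : [n] → [n] ∪ [n̄]). Then there exists a feasible set B_w ∈ F such that for every vector v in the relative interior of the cone σ_w, i.e. every v = Σ_{k=1}^n λ_k (e_{w(1)} + ⋯ + e_{w(k)}) with all λ_k > 0, and every feasible set B ∈ F with B ≠ B_w, one has ⟨e_{B_w ∩ [n]}, v⟩ < ⟨e_{B ∩ [n]}, v⟩. In particular, the minimizer of B ↦ ⟨e_{B∩[n]}, v⟩ over F is unique and is the same for all v in the relative interior of σ_w. -/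
open Finset

/-- Sign of a `Bool`: `true ↦ 1`, `false ↦ -1`. -/
def sgnR (b : Bool) : ℝ := if b then 1 else -1

/-- For a signed permutation `w` on `[n, n̄]` (encoded as an underlying permutation `w.1`
of `[n]` together with signs `w.2`, so that `w(k) = w.1 k` if `w.2 k = true` and
`w(k) = (w.1 k)‾` otherwise), the vector `e_{w(k)} ∈ ℝ^n`, with `e_ī = -e_i`. -/
def ew {n : ℕ} (w : Equiv.Perm (Fin n) × (Fin n → Bool)) (k : Fin n) : Fin n → ℝ :=
  sgnR (w.2 k) • (Pi.single (w.1 k) 1 : Fin n → ℝ)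

noncomputable def dotv {n : ℕ} (c : Fin n → ℝ) (x : Fin n → ℝ) : ℝ := ∑ i, x i * c i

lemma dotv_eVec {n : ℕ} (c : Fin n → ℝ) (C : Finset (Fin n)) :
    dotv c (eVec C) = ∑ i ∈ C, c i := by
  simp only [dotv, eVec, ite_mul, one_mul, zero_mul, Finset.sum_ite_mem, univ_inter]

lemma dotv_lin {n : ℕ} (c : Fin n → ℝ) (a b : ℝ) (x y : Fin n → ℝ) :
    dotv c (a • x + b • y) = a * dotv c x + b * dotv c y := by
  simp only [dotv, Pi.add_apply, Pi.smul_apply, smul_eq_mul, Finset.mul_sum]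
  rw [← Finset.sum_add_distrib]
  exact Finset.sum_congr rfl fun i _ => by ring

lemma dotv_sub {n : ℕ} (c : Fin n → ℝ) (x y : Fin n → ℝ) :
    dotv c (y - x) = dotv c y - dotv c x := by
  simp only [dotv, Pi.sub_apply, sub_mul, Finset.sum_sub_distrib]

lemma dotv_single {n : ℕ} (c : Fin n → ℝ) (i : Fin n) :
    dotv c (Pi.single i 1) = c i := by
  simp only [dotv, Pi.single_apply, ite_mul, one_mul, zero_mul]
  rw [Finset.sum_ite_eq' univ i c]; simp

noncomputable def dotL {n : ℕ} (c : Fin n → ℝ) : (Fin n → ℝ) →ₗ[ℝ] ℝ where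
  toFun x := dotv c x
  map_add' x y := by
    simp only [dotv, Pi.add_apply, add_mul, Finset.sum_add_distrib]
  map_smul' a x := by
    simp only [dotv, Pi.smul_apply, smul_eq_mul, RingHom.id_apply, Finset.mul_sum, mul_assoc]

lemma dotv_sum_smul {n : ℕ} (c : Fin n → ℝ) {ι : Type*} (s : Finset ι) (wt : ι → ℝ)
    (z : ι → Fin n → ℝ) : dotv c (∑ a ∈ s, wt a • z a) = ∑ a ∈ s, wt a * dotv c (z a) := by
  have := map_sum (dotL c) (fun a => wt a • z a) s
  simp only [dotL, LinearMap.coe_mk, AddHom.coe_mk] at this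
  change dotv c _ = ∑ x ∈ s, dotv c (wt x • z x) at this
  rw [this]
  exact Finset.sum_congr rfl fun a _ => by
    simp [dotv, smul_eq_mul, Finset.mul_sum, mul_assoc]

lemma dotv_sum_smul_left {n : ℕ} {ι : Type*} (s : Finset ι) (wt : ι → ℝ)
    (g : ι → Fin n → ℝ) (x : Fin n → ℝ) :
    dotv (∑ a ∈ s, wt a • g a) x = ∑ a ∈ s, wt a * dotv (g a) x := by
  simp only [dotv, Finset.sum_apply, Pi.smul_apply, smul_eq_mul, Finset.mul_sum]
  rw [Finset.sum_comm]
  exact Finset.sum_congr rfl fun a _ => Finset.sum_congr rfl fun i _ => by ring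

/-- Face lemma. -/
lemma face_mem {n : ℕ} {T : Finset (Fin n → ℝ)} {c : Fin n → ℝ} {m : ℝ}
    (hm : ∀ a ∈ T, m ≤ dotv c a) {x : Fin n → ℝ}
    (hx : x ∈ convexHull ℝ (T : Set (Fin n → ℝ))) (hxm : dotv c x ≤ m) :
    x ∈ convexHull ℝ ((T.filter fun a => dotv c a = m) : Set (Fin n → ℝ)) := by
  rw [Finset.convexHull_eq] at hx
  obtain ⟨wt, hw0, hw1, hcm⟩ := hx
  rw [Finset.centerMass_eq_of_sum_1 _ _ hw1] at hcm
  have hdx : dotv c x = ∑ a ∈ T, wt a * dotv c a := by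
    rw [← hcm]
    simpa using dotv_sum_smul c T wt id
  have hterm : ∀ a ∈ T, 0 ≤ wt a * (dotv c a - m) := fun a ha =>
    mul_nonneg (hw0 a ha) (sub_nonneg.2 (hm a ha))
  have hsum0 : ∑ a ∈ T, wt a * (dotv c a - m) = 0 := by
    have h1 : ∑ a ∈ T, wt a * (dotv c a - m) = dotv c x - m := by
      rw [hdx]
      have : ∑ a ∈ T, wt a * (dotv c a - m) = (∑ a ∈ T, wt a * dotv c a) - (∑ a ∈ T, wt a * m) := by
        rw [← Finset.sum_sub_distrib]
        exact Finset.sum_congr rfl fun a _ => by ring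
      rw [this, ← Finset.sum_mul, hw1, one_mul]
    have h2 : 0 ≤ ∑ a ∈ T, wt a * (dotv c a - m) := Finset.sum_nonneg hterm
    linarith
  have hzero : ∀ a ∈ T, wt a * (dotv c a - m) = 0 :=
    (Finset.sum_eq_zero_iff_of_nonneg hterm).1 hsum0
  have hwt0 : ∀ a ∈ T, dotv c a ≠ m → wt a = 0 := by
    intro a ha hne
    have := hzero a ha
    rcases mul_eq_zero.1 this with h | h
    · exact h
    · exact absurd (by linarith [sub_eq_zero.1 h]) hne
  set T' := T.filter fun a => dotv c a = m with hT'
  have hsum' : ∑ a ∈ T', wt a = 1 := by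
    rw [← hw1]
    apply Finset.sum_subset (Finset.filter_subset _ _)
    intro a ha ha'
    exact hwt0 a ha (fun h => ha' (Finset.mem_filter.2 ⟨ha, h⟩))
  have hxeq : x = ∑ a ∈ T', wt a • a := by
    rw [← hcm]
    refine (Finset.sum_subset (Finset.filter_subset _ _) ?_).symm
    intro a ha ha'
    have : wt a = 0 := hwt0 a ha (fun h => ha' (Finset.mem_filter.2 ⟨ha, h⟩))
    simp [this]
  rw [hxeq, ← Finset.centerMass_eq_of_sum_1 _ _ hsum']
  exact Finset.centerMass_mem_convexHull T' (fun a ha => hw0 a (Finset.filter_subset _ _ ha))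
    (by rw [hsum']; norm_num) (fun a ha => ha)

lemma basePolytope_bounds {n : ℕ} {F : Finset (Finset (Fin n))} {x : Fin n → ℝ}
    (hx : x ∈ basePolytope F) (i : Fin n) : 0 ≤ x i ∧ x i ≤ 1 := by
  have hconv : Convex ℝ ((⇑(LinearMap.proj i : (Fin n → ℝ) →ₗ[ℝ] ℝ)) ⁻¹' Set.Icc (0:ℝ) 1) :=
    (convex_Icc (0:ℝ) 1).linear_preimage _
  have hsub : eVec '' (F : Set (Finset (Fin n))) ⊆
      (⇑(LinearMap.proj i : (Fin n → ℝ) →ₗ[ℝ] ℝ)) ⁻¹' Set.Icc (0:ℝ) 1 := by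
    rintro _ ⟨B, -, rfl⟩
    simp only [Set.mem_preimage, LinearMap.proj_apply, Set.mem_Icc, eVec]
    by_cases h : i ∈ B <;> simp [h]
  have := convexHull_min hsub hconv hx
  simpa [LinearMap.proj_apply] using this

lemma dotv_le_of_mem {n : ℕ} {T : Finset (Fin n → ℝ)} {c : Fin n → ℝ} {m : ℝ}
    (hm : ∀ a ∈ T, m ≤ dotv c a) {x : Fin n → ℝ}
    (hx : x ∈ convexHull ℝ (T : Set (Fin n → ℝ))) : m ≤ dotv c x := by
  have hconv : Convex ℝ {y : Fin n → ℝ | m ≤ dotv c y} :=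
    convex_halfSpace_ge (dotL c).isLinear m
  exact convexHull_min (fun a ha => hm a ha) hconv hx

noncomputable def vvec {n : ℕ} (w : Equiv.Perm (Fin n) × (Fin n → Bool)) (μ : Fin n → ℝ) :
    Fin n → ℝ := ∑ k, μ k • ∑ j ∈ Finset.Iic k, ew w j

lemma vvec_apply {n : ℕ} (w : Equiv.Perm (Fin n) × (Fin n → Bool)) (μ : Fin n → ℝ) (i : Fin n) :
    vvec w μ i = sgnR (w.2 (w.1.symm i)) * ∑ k ∈ Finset.Ici (w.1.symm i), μ k := by
  set a := w.1.symm i with ha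
  have h1 : ∀ k : Fin n, (∑ j ∈ Finset.Iic k, ew w j) i
      = if a ∈ Finset.Iic k then sgnR (w.2 a) else 0 := by
    intro k
    rw [Finset.sum_apply]
    rw [show (∑ j ∈ Finset.Iic k, ew w j i) = ∑ j ∈ Finset.Iic k,
        (if j = a then sgnR (w.2 j) else 0) from Finset.sum_congr rfl ?_]
    · exact Finset.sum_ite_eq' _ _ _
    · intro j _
      have : w.1 j = i ↔ j = a := by
        rw [ha, Equiv.eq_symm_apply]
      simp only [ew, Pi.smul_apply, Pi.single_apply, smul_eq_mul]
      by_cases h : j = a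
      · subst h
        have h2 : i = w.1 a := (this.mpr rfl).symm
        rw [if_pos h2, if_pos rfl, mul_one]
      · have h2 : ¬ i = w.1 j := fun hh => h (this.1 hh.symm)
        rw [if_neg h2, if_neg h, mul_zero]
  have h2 : vvec w μ i = ∑ k, μ k * (if a ≤ k then sgnR (w.2 a) else 0) := by
    rw [vvec, Finset.sum_apply]
    exact Finset.sum_congr rfl fun k _ => by
      rw [Pi.smul_apply, smul_eq_mul, h1 k]; simp [Finset.mem_Iic]
  rw [h2]
  have h3 : ∀ k : Fin n, μ k * (if a ≤ k then sgnR (w.2 a) else 0)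
      = if k ∈ Finset.Ici a then sgnR (w.2 a) * μ k else 0 := by
    intro k
    by_cases h : a ≤ k <;> simp [h, Finset.mem_Ici, mul_comm]
  rw [Finset.sum_congr rfl fun k _ => h3 k]
  rw [Finset.sum_ite_mem, Finset.univ_inter, Finset.mul_sum]

lemma Ici_sum_pos {n : ℕ} {μ : Fin n → ℝ} (hμ : ∀ k, 0 < μ k) (a : Fin n) :
    0 < ∑ k ∈ Finset.Ici a, μ k :=
  Finset.sum_pos (fun k _ => hμ k) ⟨a, Finset.mem_Ici.2 le_rfl⟩

lemma Ici_sum_ne {n : ℕ} {μ : Fin n → ℝ} (hμ : ∀ k, 0 < μ k) {a b : Fin n} (hab : a ≠ b) :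
    ∑ k ∈ Finset.Ici a, μ k ≠ ∑ k ∈ Finset.Ici b, μ k := by
  have key : ∀ {a b : Fin n}, a < b → ∑ k ∈ Finset.Ici b, μ k < ∑ k ∈ Finset.Ici a, μ k := by
    intro a b h
    apply Finset.sum_lt_sum_of_subset (Finset.Ici_subset_Ici.2 h.le)
      (Finset.mem_Ici.2 (le_refl a)) (by simp [Finset.mem_Ici, not_le, h]) (hμ a)
      (fun k _ _ => (hμ k).le)
  rcases lt_or_gt_of_ne hab with h | h
  · exact (key h).ne'
  · exact (key h).ne

lemma eVec_inj {n : ℕ} {B C : Finset (Fin n)} (h : eVec B = eVec C) : B = C := by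
  ext i
  have := congrFun h i
  simp only [eVec] at this
  by_cases hB : i ∈ B <;> by_cases hC : i ∈ C <;> simp_all

lemma exists_strict_min {n : ℕ} (D : DeltaMatroid n) (v : Fin n → ℝ)
    (h0 : ∀ i, v i ≠ 0) (hne : ∀ i j : Fin n, i ≠ j → v i ≠ v j)
    (hns : ∀ i j : Fin n, v i ≠ - v j) :
    ∃ B ∈ D.feasible, ∀ C ∈ D.feasible, C ≠ B → dotv v (eVec B) < dotv v (eVec C) := by
  classical
  obtain ⟨B0, hB0, hmin⟩ :=
    D.feasible.exists_min_image (fun B => dotv v (eVec B)) D.feasible_nonempty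
  set m := dotv v (eVec B0) with hm
  by_cases huniq : ∀ C ∈ D.feasible, dotv v (eVec C) = m → C = B0
  · refine ⟨B0, hB0, fun C hC hCne => ?_⟩
    rcases lt_or_eq_of_le (hmin C hC) with h | h
    · exact h
    · exact absurd (huniq C hC h.symm) hCne
  · exfalso
    push_neg at huniq
    obtain ⟨C0, hC0, hC0m, hC0ne⟩ := huniq
    set A := D.feasible.filter (fun B => dotv v (eVec B) = m) with hA
    have hB0A : B0 ∈ A := Finset.mem_filter.2 ⟨hB0, rfl⟩
    have hC0A : C0 ∈ A := Finset.mem_filter.2 ⟨hC0, hC0m⟩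
    set P := (A ×ˢ A).filter (fun p => p.1 ≠ p.2) with hP
    have hPne : P.Nonempty :=
      ⟨(C0, B0), Finset.mem_filter.2 ⟨Finset.mem_product.2 ⟨hC0A, hB0A⟩, hC0ne⟩⟩
    obtain ⟨⟨B, B'⟩, hPmem, hPmin⟩ :=
      P.exists_min_image (fun p => (symmDiff p.1 p.2).card) hPne
    have hBA : B ∈ A := (Finset.mem_product.1 (Finset.mem_filter.1 hPmem).1).1
    have hB'A : B' ∈ A := (Finset.mem_product.1 (Finset.mem_filter.1 hPmem).1).2
    have hBB' : B ≠ B' := (Finset.mem_filter.1 hPmem).2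
    have hBF : B ∈ D.feasible := (Finset.mem_filter.1 hBA).1
    have hB'F : B' ∈ D.feasible := (Finset.mem_filter.1 hB'A).1
    have hBm : dotv v (eVec B) = m := (Finset.mem_filter.1 hBA).2
    have hB'm : dotv v (eVec B') = m := (Finset.mem_filter.1 hB'A).2
    have heVne : eVec B ≠ eVec B' := fun h => hBB' (eVec_inj h)
    have hmemB : eVec B ∈ basePolytope D.feasible :=
      subset_convexHull ℝ _ (Set.mem_image_of_mem _ hBF)
    have hmemB' : eVec B' ∈ basePolytope D.feasible :=
      subset_convexHull ℝ _ (Set.mem_image_of_mem _ hB'F)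
    set T := D.feasible.image eVec with hT
    have hTcoe : (T : Set (Fin n → ℝ)) = eVec '' (D.feasible : Set (Finset (Fin n))) :=
      Finset.coe_image
    have hTm : ∀ a ∈ T, m ≤ dotv v a := by
      intro a ha
      obtain ⟨C, hC, rfl⟩ := Finset.mem_image.1 ha
      exact hmin C hC
    have hseg : segment ℝ (eVec B) (eVec B') ⊆ basePolytope D.feasible :=
      (convex_convexHull ℝ _).segment_subset hmemB hmemB'
    set c2 : Fin n → ℝ := fun i => if i ∈ B ∩ B' then -1 else if i ∈ B ∪ B' then 0 else 1
      with hc2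
    set m2 : ℝ := -(((B ∩ B').card : ℝ)) with hm2
    have hc2C : ∀ C : Finset (Fin n), dotv c2 (eVec C)
        = -(((C ∩ (B ∩ B')).card : ℝ)) + ((C \ (B ∪ B')).card : ℝ) := by
      intro C
      rw [dotv_eVec]
      have hsplit : ∀ i ∈ C, c2 i
          = (if i ∈ B ∩ B' then (-1:ℝ) else 0) + (if i ∈ C \ (B ∪ B') then 1 else 0) := by
        intro i hiC
        by_cases h1 : i ∈ B ∩ B'
        · have h2 : i ∈ B ∪ B' := Finset.mem_union_left _ (Finset.mem_inter.1 h1).1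
          have h3 : i ∉ C \ (B ∪ B') := fun h => (Finset.mem_sdiff.1 h).2 h2
          rw [show c2 i = (-1:ℝ) from by simp only [hc2]; rw [if_pos h1],
            if_pos h1, if_neg h3]
          norm_num
        · by_cases h2 : i ∈ B ∪ B'
          · have h3 : i ∉ C \ (B ∪ B') := fun h => (Finset.mem_sdiff.1 h).2 h2
            rw [show c2 i = (0:ℝ) from by simp only [hc2]; rw [if_neg h1, if_pos h2],
              if_neg h1, if_neg h3]
            norm_num
          · have h3 : i ∈ C \ (B ∪ B') := Finset.mem_sdiff.2 ⟨hiC, h2⟩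
            rw [show c2 i = (1:ℝ) from by simp only [hc2]; rw [if_neg h1, if_neg h2],
              if_neg h1, if_pos h3]
            norm_num
      rw [Finset.sum_congr rfl hsplit, Finset.sum_add_distrib]
      congr 1
      · rw [Finset.sum_ite_mem, Finset.sum_const]
        simp
      · rw [Finset.sum_ite_mem, Finset.sum_const]
        have : C ∩ (C \ (B ∪ B')) = C \ (B ∪ B') :=
          Finset.inter_eq_right.2 (Finset.sdiff_subset)
        rw [this]
        simp
    have hm2le : ∀ C : Finset (Fin n), m2 ≤ dotv c2 (eVec C) := by
      intro C
      rw [hc2C, hm2]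
      have h1 : ((C ∩ (B ∩ B')).card : ℝ) ≤ ((B ∩ B').card : ℝ) := by
        exact_mod_cast Finset.card_le_card (Finset.inter_subset_right)
      have h2 : (0:ℝ) ≤ ((C \ (B ∪ B')).card : ℝ) := Nat.cast_nonneg _
      linarith
    have hm2eq : ∀ C : Finset (Fin n), dotv c2 (eVec C) = m2 →
        B ∩ B' ⊆ C ∧ C ⊆ B ∪ B' := by
      intro C hCeq
      rw [hc2C, hm2] at hCeq
      have h1 : ((C ∩ (B ∩ B')).card : ℝ) ≤ ((B ∩ B').card : ℝ) := by
        exact_mod_cast Finset.card_le_card (Finset.inter_subset_right)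
      have h2 : (0:ℝ) ≤ ((C \ (B ∪ B')).card : ℝ) := Nat.cast_nonneg _
      have h3 : ((C \ (B ∪ B')).card : ℝ) = 0 := by linarith
      have h4 : ((C ∩ (B ∩ B')).card : ℝ) = ((B ∩ B').card : ℝ) := by linarith
      have h5 : C \ (B ∪ B') = ∅ := by
        have : (C \ (B ∪ B')).card = 0 := by exact_mod_cast h3
        exact Finset.card_eq_zero.1 this
      have h6 : C ∩ (B ∩ B') = B ∩ B' := by
        apply Finset.eq_of_subset_of_card_le (Finset.inter_subset_right)
        exact_mod_cast h4.ge
      constructor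
      · rw [← h6]; exact Finset.inter_subset_left
      · exact (Finset.sdiff_eq_empty_iff_subset).1 h5
    have hbetween : ∀ C ∈ A, B ∩ B' ⊆ C → C ⊆ B ∪ B' → C = B ∨ C = B' := by
      intro C hCA hsub1 hsub2
      by_contra hcon
      push_neg at hcon
      obtain ⟨hCB, hCB'⟩ := hcon
      have hsubset : symmDiff C B ⊆ symmDiff B B' := by
        intro i hi
        rw [Finset.mem_symmDiff] at hi ⊢
        rcases hi with ⟨hiC, hiB⟩ | ⟨hiB, hiC⟩
        · rcases Finset.mem_union.1 (hsub2 hiC) with h | h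
          · exact absurd h hiB
          · exact Or.inr ⟨h, hiB⟩
        · exact Or.inl ⟨hiB, fun hiB' => hiC (hsub1 (Finset.mem_inter.2 ⟨hiB, hiB'⟩))⟩
      have hwit : ∃ i, i ∈ symmDiff B B' ∧ i ∉ symmDiff C B := by
        have hCB'ne : symmDiff C B' ≠ ∅ := fun h => hCB' (by
          have : symmDiff C B' = ⊥ := h
          exact symmDiff_eq_bot.1 this)
        obtain ⟨i, hi⟩ := Finset.nonempty_iff_ne_empty.2 hCB'ne
        rw [Finset.mem_symmDiff] at hi
        rcases hi with ⟨hiC, hiB'⟩ | ⟨hiB', hiC⟩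
        · have hiB : i ∈ B := by
            rcases Finset.mem_union.1 (hsub2 hiC) with h | h
            · exact h
            · exact absurd h hiB'
          refine ⟨i, Finset.mem_symmDiff.2 (Or.inl ⟨hiB, hiB'⟩), fun hmem => ?_⟩
          rcases Finset.mem_symmDiff.1 hmem with ⟨h1, h2⟩ | ⟨h1, h2⟩
          · exact h2 hiB
          · exact h2 hiC
        · have hiB : i ∉ B := fun hiB => hiC (hsub1 (Finset.mem_inter.2 ⟨hiB, hiB'⟩))
          refine ⟨i, Finset.mem_symmDiff.2 (Or.inr ⟨hiB', hiB⟩), fun hmem => ?_⟩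
          rcases Finset.mem_symmDiff.1 hmem with ⟨h1, h2⟩ | ⟨h1, h2⟩
          · exact hiC h1
          · exact hiB h1
      obtain ⟨i, hi1, hi2⟩ := hwit
      have hss : symmDiff C B ⊂ symmDiff B B' := ⟨hsubset, fun hsub => hi2 (hsub hi1)⟩
      have hlt := Finset.card_lt_card hss
      have hmemP : (C, B) ∈ P := Finset.mem_filter.2 ⟨Finset.mem_product.2 ⟨hCA, hBA⟩, hCB⟩
      have := hPmin (C, B) hmemP
      simp only at this hlt
      omega
    have hfilt : T.filter (fun a => dotv v a = m) = A.image eVec := by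
      rw [hT, Finset.filter_image]
    have hkey : ∀ z ∈ basePolytope D.feasible, dotv v z = m →
        (∀ i ∈ B ∩ B', z i = 1) → (∀ i, i ∉ B ∪ B' → z i = 0) →
        z ∈ segment ℝ (eVec B) (eVec B') := by
      intro z hz hzm hz1 hz0
      have hz' : z ∈ convexHull ℝ (T : Set (Fin n → ℝ)) := by
        rw [hTcoe]; exact hz
      have hzA : z ∈ convexHull ℝ ((A.image eVec : Finset (Fin n → ℝ)) : Set (Fin n → ℝ)) := by
        rw [← hfilt]
        exact face_mem hTm hz' (le_of_eq hzm)
      have hz2 : dotv c2 z = m2 := by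
        rw [dotv]
        have hpt : ∀ i : Fin n, z i * c2 i = if i ∈ B ∩ B' then (-1:ℝ) else 0 := by
          intro i
          by_cases h1 : i ∈ B ∩ B'
          · rw [hz1 i h1, show c2 i = (-1:ℝ) from by simp only [hc2]; rw [if_pos h1],
              if_pos h1]
            norm_num
          · by_cases h2 : i ∈ B ∪ B'
            · rw [show c2 i = (0:ℝ) from by simp only [hc2]; rw [if_neg h1, if_pos h2],
                if_neg h1]
              norm_num
            · rw [hz0 i h2, if_neg h1]
              norm_num
        rw [Finset.sum_congr rfl (fun i _ => hpt i), Finset.sum_ite_mem, Finset.univ_inter,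
          Finset.sum_const, hm2]
        simp
      have hAm2 : ∀ a ∈ A.image eVec, m2 ≤ dotv c2 a := by
        intro a ha
        obtain ⟨C, _, rfl⟩ := Finset.mem_image.1 ha
        exact hm2le C
      have hz3 : z ∈ convexHull ℝ
          (((A.image eVec).filter fun a => dotv c2 a = m2 : Finset (Fin n → ℝ)) :
            Set (Fin n → ℝ)) :=
        face_mem hAm2 hzA (le_of_eq hz2)
      have hsubBB' : (((A.image eVec).filter fun a => dotv c2 a = m2 : Finset (Fin n → ℝ)) :
          Set (Fin n → ℝ)) ⊆ {eVec B, eVec B'} := by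
        intro a ha
        obtain ⟨haA, ham2⟩ := Finset.mem_filter.1 (Finset.mem_coe.1 ha)
        obtain ⟨C, hCA, rfl⟩ := Finset.mem_image.1 haA
        obtain ⟨hs1, hs2⟩ := hm2eq C ham2
        rcases hbetween C hCA hs1 hs2 with h | h
        · exact Or.inl (by rw [h])
        · exact Or.inr (by rw [h]; exact rfl)
      have := convexHull_mono hsubBB' hz3
      rwa [convexHull_pair] at this
    have hext : IsExtreme ℝ (basePolytope D.feasible) (segment ℝ (eVec B) (eVec B')) := by
      constructor
      · exact hseg
      · rintro x1 hx1 x2 hx2 x hxseg hxopen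
        obtain ⟨ta, tb, hta, htb, htab, hxt⟩ := hxseg
        obtain ⟨sa, sb, hsa, hsb, hsab, hxe⟩ := hxopen
        have hdx : dotv v x = m := by
          rw [← hxt, dotv_lin, hBm, hB'm, ← add_mul, htab, one_mul]
        have h1 : m ≤ dotv v x1 := dotv_le_of_mem hTm (by rw [hTcoe]; exact hx1)
        have h2 : m ≤ dotv v x2 := dotv_le_of_mem hTm (by rw [hTcoe]; exact hx2)
        have hdsum : sa * dotv v x1 + sb * dotv v x2 = m := by
          rw [← dotv_lin, hxe, hdx]
        have e1 : dotv v x1 = m := by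
          have hm' : sa * m + sb * m = m := by rw [← add_mul, hsab, one_mul]
          have hle : sa * dotv v x1 ≤ sa * m := by
            linarith [mul_le_mul_of_nonneg_left h2 hsb.le]
          exact le_antisymm (le_of_mul_le_mul_left hle hsa) h1
        have e2 : dotv v x2 = m := by
          have hm' : sa * m + sb * m = m := by rw [← add_mul, hsab, one_mul]
          have hle : sb * dotv v x2 ≤ sb * m := by
            linarith [mul_le_mul_of_nonneg_left h1 hsa.le]
          exact le_antisymm (le_of_mul_le_mul_left hle hsb) h2
        have hxco1 : ∀ i ∈ B ∩ B', x i = 1 := by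
          intro i hi
          have hB1 : eVec B i = 1 := by simp [eVec, (Finset.mem_inter.1 hi).1]
          have hB'1 : eVec B' i = 1 := by simp [eVec, (Finset.mem_inter.1 hi).2]
          have := congrFun hxt i
          simp only [Pi.add_apply, Pi.smul_apply, smul_eq_mul, hB1, hB'1] at this
          linarith [this]
        have hxco0 : ∀ i, i ∉ B ∪ B' → x i = 0 := by
          intro i hi
          have hiB : i ∉ B := fun h => hi (Finset.mem_union_left _ h)
          have hiB' : i ∉ B' := fun h => hi (Finset.mem_union_right _ h)
          have hB1 : eVec B i = 0 := by simp [eVec, hiB]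
          have hB'1 : eVec B' i = 0 := by simp [eVec, hiB']
          have := congrFun hxt i
          simp only [Pi.add_apply, Pi.smul_apply, smul_eq_mul, hB1, hB'1] at this
          linarith [this]
        have hco1 : ∀ i ∈ B ∩ B', x1 i = 1 ∧ x2 i = 1 := by
          intro i hi
          have hxi : sa * x1 i + sb * x2 i = 1 := by
            have := congrFun hxe i
            simp only [Pi.add_apply, Pi.smul_apply, smul_eq_mul] at this
            rw [this, hxco1 i hi]
          have hb1 := basePolytope_bounds hx1 i
          have hb2 := basePolytope_bounds hx2 i
          have ht1 : 0 ≤ sa * (1 - x1 i) := mul_nonneg hsa.le (by linarith [hb1.2])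
          have ht2 : 0 ≤ sb * (1 - x2 i) := mul_nonneg hsb.le (by linarith [hb2.2])
          have hz : sa * (1 - x1 i) + sb * (1 - x2 i) = 0 := by nlinarith [hxi, hsab]
          constructor
          · have : sa * (1 - x1 i) = 0 := by linarith
            have := (mul_eq_zero.1 this).resolve_left (ne_of_gt hsa)
            linarith
          · have : sb * (1 - x2 i) = 0 := by linarith
            have := (mul_eq_zero.1 this).resolve_left (ne_of_gt hsb)
            linarith
        have hco0 : ∀ i, i ∉ B ∪ B' → x1 i = 0 ∧ x2 i = 0 := by
          intro i hi
          have hxi : sa * x1 i + sb * x2 i = 0 := by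
            have := congrFun hxe i
            simp only [Pi.add_apply, Pi.smul_apply, smul_eq_mul] at this
            rw [this, hxco0 i hi]
          have hb1 := basePolytope_bounds hx1 i
          have hb2 := basePolytope_bounds hx2 i
          have ht1 : 0 ≤ sa * x1 i := mul_nonneg hsa.le hb1.1
          have ht2 : 0 ≤ sb * x2 i := mul_nonneg hsb.le hb2.1
          constructor
          · have : sa * x1 i = 0 := by linarith
            have := (mul_eq_zero.1 this).resolve_left (ne_of_gt hsa)
            linarith
          · have : sb * x2 i = 0 := by linarith
            have := (mul_eq_zero.1 this).resolve_left (ne_of_gt hsb)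
            linarith
        exact hkey x1 hx1 e1 (fun i hi => (hco1 i hi).1) (fun i hi => (hco0 i hi).1)
    have hdir := D.edge_dir (eVec B) (eVec B') hmemB hmemB' heVne hext
    have hdot0 : dotv v (eVec B' - eVec B) = 0 := by
      rw [dotv_sub, hBm, hB'm]; ring
    rcases hdir with ⟨i, h | h⟩ | ⟨i, j, h | h | h⟩
    · rw [h, dotv_single] at hdot0
      exact h0 i hdot0
    · rw [h] at hdot0
      rw [show dotv v (-Pi.single i 1) = -dotv v (Pi.single i 1) by
        rw [show (-Pi.single i 1 : Fin n → ℝ) = (0 : Fin n → ℝ) - Pi.single i 1 by ring,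
          dotv_sub]
        simp [dotv], dotv_single] at hdot0
      exact h0 i (by linarith)
    · rw [h] at hdot0
      have : dotv v (Pi.single i 1 + Pi.single j 1) = v i + v j := by
        rw [show (Pi.single i 1 + Pi.single j 1 : Fin n → ℝ)
            = (1:ℝ) • (Pi.single i 1 : Fin n → ℝ) + (1:ℝ) • (Pi.single j 1 : Fin n → ℝ) by
          simp, dotv_lin, dotv_single, dotv_single]
        ring
      rw [this] at hdot0
      exact hns i j (by linarith)
    · rw [h] at hdot0
      have : dotv v (-(Pi.single i 1 + Pi.single j 1)) = -(v i + v j) := by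
        rw [show (-(Pi.single i 1 + Pi.single j 1) : Fin n → ℝ)
            = (-1:ℝ) • (Pi.single i 1 : Fin n → ℝ) + (-1:ℝ) • (Pi.single j 1 : Fin n → ℝ) by
          ext k; simp; ring, dotv_lin, dotv_single, dotv_single]
        ring
      rw [this] at hdot0
      exact hns i j (by linarith)
    · by_cases hij : i = j
      · subst hij
        have hd0 : eVec B' - eVec B = 0 := by
          rw [h]; ring
        exact heVne (sub_eq_zero.1 hd0).symm
      · rw [h] at hdot0
        have : dotv v (Pi.single i 1 - Pi.single j 1) = v i - v j := by
          rw [show (Pi.single i 1 - Pi.single j 1 : Fin n → ℝ)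
              = (1:ℝ) • (Pi.single i 1 : Fin n → ℝ) + (-1:ℝ) • (Pi.single j 1 : Fin n → ℝ) by
            ext k; simp; ring, dotv_lin, dotv_single, dotv_single]
          ring
        rw [this] at hdot0
        exact hne i j hij (by linarith)

/-- Existence and uniqueness of the `w`-minimal feasible set: there is `B_w ∈ F` whose
vertex strictly minimizes `⟨e_{B ∩ [n]}, v⟩` for every
`v = Σ_k λ_k (e_{w(1)} + ⋯ + e_{w(k)})` with all `λ_k > 0` (the relative interior
of the cone `σ_w`). -/
theorem stmt13 {n : ℕ} (hn : 1 ≤ n) (D : DeltaMatroid n)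
    (w : Equiv.Perm (Fin n) × (Fin n → Bool)) :
    ∃ Bw ∈ D.feasible, ∀ lam : Fin n → ℝ, (∀ k, 0 < lam k) →
      ∀ B ∈ D.feasible, B ≠ Bw →
        ∑ i, eVec Bw i * (∑ k, lam k • ∑ j ∈ Finset.Iic k, ew w j) i
          < ∑ i, eVec B i * (∑ k, lam k • ∑ j ∈ Finset.Iic k, ew w j) i := by
  classical
  have hsgn : ∀ b : Bool, sgnR b = 1 ∨ sgnR b = -1 := by
    intro b; cases b <;> simp [sgnR]
  have chamber : ∀ μ : Fin n → ℝ, (∀ k, 0 < μ k) →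
      (∀ i, vvec w μ i ≠ 0) ∧ (∀ i j, i ≠ j → vvec w μ i ≠ vvec w μ j) ∧
      (∀ i j, vvec w μ i ≠ - vvec w μ j) := by
    intro μ hμ
    have hT : ∀ a : Fin n, 0 < ∑ k ∈ Finset.Ici a, μ k := Ici_sum_pos hμ
    refine ⟨?_, ?_, ?_⟩
    · intro i
      rw [vvec_apply]
      rcases hsgn (w.2 (w.1.symm i)) with h | h <;> rw [h] <;>
        intro hcon <;> nlinarith [hT (w.1.symm i)]
    · intro i j hij
      have hab : w.1.symm i ≠ w.1.symm j := fun h => hij (w.1.symm.injective h)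
      have hTab := Ici_sum_ne hμ hab
      rw [vvec_apply, vvec_apply]
      rcases hsgn (w.2 (w.1.symm i)) with h1 | h1 <;>
        rcases hsgn (w.2 (w.1.symm j)) with h2 | h2 <;> rw [h1, h2] <;> intro hcon <;>
        first
          | exact hTab (by linarith)
          | linarith [hT (w.1.symm i), hT (w.1.symm j)]
    · intro i j
      by_cases hij : i = j
      · subst hij
        rw [vvec_apply]
        rcases hsgn (w.2 (w.1.symm i)) with h | h <;> rw [h] <;> intro hcon <;>
          nlinarith [hT (w.1.symm i)]
      · have hab : w.1.symm i ≠ w.1.symm j := fun h => hij (w.1.symm.injective h)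
        have hTab := Ici_sum_ne hμ hab
        rw [vvec_apply, vvec_apply]
        rcases hsgn (w.2 (w.1.symm i)) with h1 | h1 <;>
          rcases hsgn (w.2 (w.1.symm j)) with h2 | h2 <;> rw [h1, h2] <;> intro hcon <;>
          first
            | exact hTab (by linarith)
            | linarith [hT (w.1.symm i), hT (w.1.symm j)]
  have hcoef : ∀ (C : Finset (Fin n)) (μ : Fin n → ℝ),
      dotv (vvec w μ) (eVec C)
        = ∑ k, μ k * dotv (∑ j ∈ Finset.Iic k, ew w j) (eVec C) := by
    intro C μ
    exact dotv_sum_smul_left Finset.univ μ (fun k => ∑ j ∈ Finset.Iic k, ew w j) (eVec C)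
  have h1pos : ∀ k : Fin n, (0:ℝ) < (fun _ : Fin n => (1:ℝ)) k := fun _ => one_pos
  obtain ⟨cham1, cham2, cham3⟩ := chamber (fun _ => 1) h1pos
  obtain ⟨Bw, hBw, hstrict0⟩ := exists_strict_min D (vvec w (fun _ => 1)) cham1 cham2 cham3
  refine ⟨Bw, hBw, ?_⟩
  intro lam hlam B hB hBne
  obtain ⟨chamL1, chamL2, chamL3⟩ := chamber lam hlam
  obtain ⟨B1, hB1, hstrict1⟩ := exists_strict_min D (vvec w lam) chamL1 chamL2 chamL3
  have hB1w : B1 = Bw := by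
    by_contra hne'
    set μt : ℝ → Fin n → ℝ := fun t k => (1 - t) + t * lam k with hμt
    have hpos : ∀ t ∈ Set.Icc (0:ℝ) 1, ∀ k, 0 < μt t k := by
      rintro t ⟨ht0, ht1⟩ k
      rcases eq_or_lt_of_le ht1 with h | h
      · subst h
        show 0 < (1 - 1) + 1 * lam k
        linarith [hlam k]
      · have h2 : 0 ≤ t * lam k := mul_nonneg ht0 (hlam k).le
        have : μt t k = (1 - t) + t * lam k := rfl
        rw [this]; linarith
    have hcont : ∀ C : Finset (Fin n),
        Continuous fun t : ℝ => dotv (vvec w (μt t)) (eVec C) := by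
      intro C
      have : (fun t : ℝ => dotv (vvec w (μt t)) (eVec C))
          = fun t : ℝ => ∑ k : Fin n,
              ((1 - t) + t * lam k) * dotv (∑ j ∈ Finset.Iic k, ew w j) (eVec C) :=
        funext fun t => hcoef C (μt t)
      rw [this]
      apply continuous_finset_sum
      intro k _
      fun_prop
    set U : Set ℝ := {t | ∀ C ∈ D.feasible, C ≠ Bw →
      dotv (vvec w (μt t)) (eVec Bw) < dotv (vvec w (μt t)) (eVec C)} with hU
    set V : Set ℝ := ⋃ C ∈ (D.feasible : Set (Finset (Fin n))),
      {t | dotv (vvec w (μt t)) (eVec C) < dotv (vvec w (μt t)) (eVec Bw)} with hV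
    have hUopen : IsOpen U := by
      have hUeq : U = ⋂ C ∈ (D.feasible.erase Bw),
          {t | dotv (vvec w (μt t)) (eVec Bw) < dotv (vvec w (μt t)) (eVec C)} := by
        ext t
        simp only [hU, Set.mem_setOf_eq, Set.mem_iInter, Finset.mem_erase]
        constructor
        · rintro h C ⟨hne2, hC⟩; exact h C hC hne2
        · intro h C hC hne2; exact h C ⟨hne2, hC⟩
      rw [hUeq]
      exact isOpen_biInter_finset fun C _ => isOpen_lt (hcont Bw) (hcont C)
    have hVopen : IsOpen V := isOpen_biUnion fun C _ => isOpen_lt (hcont C) (hcont Bw)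
    have hcover : Set.Icc (0:ℝ) 1 ⊆ U ∪ V := by
      intro t ht
      obtain ⟨cht1, cht2, cht3⟩ := chamber (μt t) (hpos t ht)
      obtain ⟨M, hM, hMs⟩ := exists_strict_min D (vvec w (μt t)) cht1 cht2 cht3
      by_cases hMw : M = Bw
      · left
        subst hMw
        exact fun C hC hne2 => hMs C hC hne2
      · right
        exact Set.mem_biUnion hM (hMs Bw hBw (fun h => hMw h.symm))
    have h0U : (0:ℝ) ∈ Set.Icc (0:ℝ) 1 ∩ U := by
      refine ⟨⟨le_refl 0, zero_le_one⟩, ?_⟩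
      have hμ0 : μt 0 = fun _ : Fin n => (1:ℝ) := by
        funext k; show (1 - 0) + 0 * lam k = 1; ring
      show ∀ C ∈ D.feasible, C ≠ Bw → _
      intro C hC hne2
      rw [hμ0]
      exact hstrict0 C hC hne2
    have h1V : (1:ℝ) ∈ Set.Icc (0:ℝ) 1 ∩ V := by
      refine ⟨⟨zero_le_one, le_refl 1⟩, ?_⟩
      have hμ1 : μt 1 = lam := by
        funext k; show (1 - 1) + 1 * lam k = lam k; ring
      refine Set.mem_biUnion hB1 ?_
      show dotv (vvec w (μt 1)) (eVec B1) < dotv (vvec w (μt 1)) (eVec Bw)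
      rw [hμ1]
      exact hstrict1 Bw hBw (fun h => hne' h.symm)
    obtain ⟨t, htI, htU, htV⟩ := isPreconnected_Icc U V hUopen hVopen hcover ⟨0, h0U⟩ ⟨1, h1V⟩
    obtain ⟨C, hC, hCt⟩ := Set.mem_iUnion₂.1 htV
    have hCw : C ≠ Bw := fun h => by
      rw [h] at hCt
      have hCt' : dotv (vvec w (μt t)) (eVec Bw) < dotv (vvec w (μt t)) (eVec Bw) := hCt
      exact lt_irrefl _ hCt'
    exact absurd (htU C hC hCw) (not_lt.2 (le_of_lt hCt))
  subst hB1w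
  exact hstrict1 B hB hBne
end

section
/- Let n ≥ 1, let D_1,…,D_m be delta-matroids on [n, n̄] with feasible-set collections F_1,…,F_m, and let c_1,…,c_m ∈ ℤ. If Σ_{j=1}^m c_j · 1_{P(D_j)}(x) = 0 for every x ∈ ℝ^n (where 1_{P(D_j)} is the indicator function of the polytope P(D_j)), then Σ_{j=1}^m c_j · |F_j| = 0. That is, the function sending a delta-matroid to its number of feasible sets is valuative. -/
open Finset

/-- A delta-matroid on `[n, n̄]`: a nonempty collection of (maximal admissible) feasible sets,
each recorded via its intersection with `[n]`, such that every edge of the base polytope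
(i.e. every segment between two distinct points which is an extreme subset of the polytope)
is a parallel translate of `e_i` or `e_i ± e_j`. -/

lemma eVec_injective {n : ℕ} : Function.Injective (eVec (n := n)) := by
  intro S T hST
  ext i
  have := congrFun hST i
  by_cases hS : i ∈ S <;> by_cases hT : i ∈ T <;> simp_all [eVec]

lemma basePolytope_subset_cube {n : ℕ} (F : Finset (Finset (Fin n))) :
    basePolytope F ⊆ Set.pi Set.univ (fun _ : Fin n => Set.Icc (0:ℝ) 1) := by
  apply convexHull_min
  · rintro _ ⟨S, -, rfl⟩ i -
    by_cases h : i ∈ S <;> simp [eVec, h]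
  · exact convex_pi fun i _ => convex_Icc 0 1

lemma mem_basePolytope_iff {n : ℕ} (F : Finset (Finset (Fin n))) (S : Finset (Fin n)) :
    eVec S ∈ basePolytope F ↔ S ∈ F := by
  constructor
  · intro hmem
    have hext : eVec S ∈ (basePolytope F).extremePoints ℝ := by
      rw [mem_extremePoints]
      refine ⟨hmem, fun x₁ h₁ x₂ h₂ hseg => ?_⟩
      obtain ⟨a, b, ha, hb, hab, hsum⟩ := hseg
      have c1 := basePolytope_subset_cube F h₁
      have c2 := basePolytope_subset_cube F h₂
      constructor <;> ext i <;>
      · have e := congrFun hsum i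
        have i1 := c1 i (Set.mem_univ i)
        have i2 := c2 i (Set.mem_univ i)
        simp only [Set.mem_Icc] at i1 i2
        simp only [Pi.add_apply, Pi.smul_apply, smul_eq_mul] at e
        by_cases hS : i ∈ S <;> simp only [eVec, hS, if_true, if_false] at e ⊢ <;>
          nlinarith [i1.1, i1.2, i2.1, i2.2]
    obtain ⟨T, hT, hTe⟩ := extremePoints_convexHull_subset hext
    rwa [eVec_injective hTe] at hT
  · intro hS
    exact subset_convexHull ℝ _ ⟨S, hS, rfl⟩

lemma card_eq_sum_indicator {n : ℕ} (F : Finset (Finset (Fin n))) :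
    (F.card : ℤ) =
      ∑ S : Finset (Fin n), Set.indicator (basePolytope F) (fun _ => (1 : ℤ)) (eVec S) := by
  have key : ∀ S : Finset (Fin n),
      Set.indicator (basePolytope F) (fun _ => (1 : ℤ)) (eVec S)
        = if S ∈ F then 1 else 0 := fun S => by
    by_cases hS : S ∈ F
    · rw [Set.indicator_of_mem ((mem_basePolytope_iff F S).2 hS), if_pos hS]
    · rw [Set.indicator_of_notMem (fun hm => hS ((mem_basePolytope_iff F S).1 hm)), if_neg hS]
  simp [key, Finset.sum_ite_mem]

/-- Valuativity of the number of feasible sets: if an integer combination of indicator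
functions of the base polytopes `P(D_j)` vanishes identically on `ℝ^n`, then the same
combination of the numbers of feasible sets vanishes. -/
theorem stmt14 {n m : ℕ} (hn : 1 ≤ n) (D : Fin m → DeltaMatroid n) (c : Fin m → ℤ)
    (h : ∀ x : Fin n → ℝ,
      ∑ j, c j * Set.indicator (basePolytope (D j).feasible) (fun _ => (1 : ℤ)) x = 0) :
    ∑ j, c j * ((D j).feasible.card : ℤ) = 0 := by
  have := fun S : Finset (Fin n) => h (eVec S)
  calc ∑ j, c j * ((D j).feasible.card : ℤ)
      = ∑ j, ∑ S : Finset (Fin n),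
          c j * Set.indicator (basePolytope (D j).feasible) (fun _ => (1 : ℤ)) (eVec S) := by
        refine Finset.sum_congr rfl fun j _ => ?_
        rw [card_eq_sum_indicator, Finset.mul_sum]
    _ = ∑ S : Finset (Fin n), ∑ j,
          c j * Set.indicator (basePolytope (D j).feasible) (fun _ => (1 : ℤ)) (eVec S) :=
        Finset.sum_comm
    _ = 0 := by simp only [this, Finset.sum_const_zero]
end

section
/- In ℤ^7, let g_1 = e_1+e_2, g_2 = e_1+e_3, g_3 = e_2+e_3, g_4 = e_3+e_4, g_5 = e_4+e_5, g_6 = e_5+e_6, g_7 = e_5+e_7, g_8 = e_6+e_7, and let w = (1,1,1,0,1,1,1). Then: (a) w = g_2 + g_3 − g_4 + g_5 + g_8, so w lies in the subgroup of ℤ^7 generated by g_1,…,g_8; (b) w = (1/2)(g_1+g_2+g_3) + (1/2)(g_6+g_7+g_8) in ℝ^7, so w lies in the rational cone generated by g_1,…,g_8; but (c) there exist no nonnegative integers a_1,…,a_8 with Σ_{i=1}^8 a_i g_i = w, i.e. w does not lie in the additive submonoid of ℤ^7 generated by g_1,…,g_8. -/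
namespace StmtAux

@[simp] lemma cons_val_five {α : Type*} {m : ℕ} (x : α) (u : Fin m.succ.succ.succ.succ.succ → α) :
    Matrix.vecCons x u 5 = Matrix.vecHead (Matrix.vecTail (Matrix.vecTail (Matrix.vecTail (Matrix.vecTail u)))) :=
  rfl

@[simp] lemma cons_val_six {α : Type*} {m : ℕ} (x : α) (u : Fin m.succ.succ.succ.succ.succ.succ → α) :
    Matrix.vecCons x u 6 = Matrix.vecHead (Matrix.vecTail (Matrix.vecTail (Matrix.vecTail (Matrix.vecTail (Matrix.vecTail u))))) :=
  rfl

@[simp] lemma cons_val_seven {α : Type*} {m : ℕ} (x : α) (u : Fin m.succ.succ.succ.succ.succ.succ.succ → α) :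
    Matrix.vecCons x u 7 = Matrix.vecHead (Matrix.vecTail (Matrix.vecTail (Matrix.vecTail (Matrix.vecTail (Matrix.vecTail (Matrix.vecTail u)))))) :=
  rfl

end StmtAux

open StmtAux

/-- The eight generators `g_1,…,g_8 ∈ ℤ^7` (0-indexed as `g 0,…,g 7`):
`e₁+e₂, e₁+e₃, e₂+e₃, e₃+e₄, e₄+e₅, e₅+e₆, e₅+e₇, e₆+e₇`. -/
def gZ : Fin 8 → Fin 7 → ℤ :=
  ![![1,1,0,0,0,0,0], ![1,0,1,0,0,0,0], ![0,1,1,0,0,0,0], ![0,0,1,1,0,0,0],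
    ![0,0,0,1,1,0,0], ![0,0,0,0,1,1,0], ![0,0,0,0,1,0,1], ![0,0,0,0,0,1,1]]

/-- The point `w = (1,1,1,0,1,1,1) ∈ ℤ^7`. -/
def wZ : Fin 7 → ℤ := ![1,1,1,0,1,1,1]

/-- The real versions of the generators. -/
noncomputable def gR (a : Fin 8) : Fin 7 → ℝ := fun i => (gZ a i : ℝ)

/-- The real version of `w`. -/
noncomputable def wR : Fin 7 → ℝ := fun i => (wZ i : ℝ)

/-- (a) `w = g₂ + g₃ − g₄ + g₅ + g₈`, so `w` lies in the subgroup of `ℤ^7` generated by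
`g₁,…,g₈`; (b) `w = ½(g₁+g₂+g₃) + ½(g₆+g₇+g₈)`, so `w` lies in the cone generated by
`g₁,…,g₈`; but (c) `w` is not an ℕ-linear combination of `g₁,…,g₈`, i.e. it does not lie
in the additive submonoid of `ℤ^7` they generate. -/
theorem stmt15 :
    (wZ = gZ 1 + gZ 2 - gZ 3 + gZ 4 + gZ 7 ∧
      wZ ∈ AddSubgroup.closure (Set.range gZ)) ∧
    (wR = (1/2 : ℝ) • (gR 0 + gR 1 + gR 2) + (1/2 : ℝ) • (gR 5 + gR 6 + gR 7) ∧
      ∃ a : Fin 8 → ℝ, (∀ i, 0 ≤ a i) ∧ ∑ i, a i • gR i = wR) ∧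
    ¬ ∃ a : Fin 8 → ℕ, ∑ i, a i • gZ i = wZ := by
  have ha : wZ = gZ 1 + gZ 2 - gZ 3 + gZ 4 + gZ 7 := by
    funext i; fin_cases i <;> simp [gZ, wZ]
  have hb : wR = (1/2 : ℝ) • (gR 0 + gR 1 + gR 2) + (1/2 : ℝ) • (gR 5 + gR 6 + gR 7) := by
    funext i; fin_cases i <;> simp [gR, wR, gZ, wZ] <;> norm_num
  refine ⟨⟨ha, ?_⟩, ⟨hb, ?_⟩, ?_⟩
  · rw [ha]
    have h : ∀ j, gZ j ∈ AddSubgroup.closure (Set.range gZ) := fun j =>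
      AddSubgroup.subset_closure ⟨j, rfl⟩
    exact add_mem (add_mem (sub_mem (add_mem (h 1) (h 2)) (h 3)) (h 4)) (h 7)
  · refine ⟨![1/2, 1/2, 1/2, 0, 0, 1/2, 1/2, 1/2], fun i => by fin_cases i <;> norm_num, ?_⟩
    rw [Fin.sum_univ_eight, hb]
    norm_num
    funext i
    simp [smul_add, Pi.add_apply, Pi.smul_apply, smul_eq_mul]
    ring
  · rintro ⟨a, h⟩
    have h0 := congrFun h 0
    have h1 := congrFun h 1
    have h2 := congrFun h 2
    have h3 := congrFun h 3
    simp [Fin.sum_univ_eight, gZ, wZ, Matrix.vecHead, Matrix.vecTail] at h0 h1 h2 h3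
    omega
end
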